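/- Let G be a finite p-group and F a field of characteristic p. If a finite-dimensional F G-module M₁ contains an element m with N·m ≠ 0 (where N is the norm element), then M₁ has a direct summand isomorphic to F G. -/

import Mathlib

/-- The norm element `N = ∑_{g ∈ G} g` of the group algebra. -/
noncomputable def normElem (F : Type) (G : Type) [Field F] [Group G] [Fintype G] :
    MonoidAlgebra F G :=
  ∑ g : G, MonoidAlgebra.of F G g

section Aux

variable (F : Type) [Field F] (G : Type) [Group G] [Fintype G]

lemma nsmul_p_eq_zero (p : ℕ) [CharP F p] (v : MonoidAlgebra F G) : p • v = 0 := by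
  rw [← Nat.cast_smul_eq_nsmul F, CharP.cast_eq_zero, zero_smul]

lemma normElem_apply (k : G) : (normElem F G).coeff k = 1 := by
  classical
  rw [normElem, MonoidAlgebra.coeff_sum, Finsupp.finset_sum_apply]
  rw [Finset.sum_eq_single k]
  · simp [MonoidAlgebra.of_apply, MonoidAlgebra.coeff_single, Finsupp.single_apply]
  · intro b _ hb; simp [MonoidAlgebra.of_apply, MonoidAlgebra.coeff_single, Finsupp.single_apply, hb]
  · simp

lemma normElem_mul (c : MonoidAlgebra F G) :
    normElem F G * c = (∑ g : G, c.coeff g) • normElem F G := by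
  classical
  ext k
  rw [MonoidAlgebra.coeff_smul_apply, normElem_apply, smul_eq_mul, mul_one]
  rw [normElem, Finset.sum_mul, MonoidAlgebra.coeff_sum, Finsupp.finset_sum_apply]
  rw [← Equiv.sum_comp ((Equiv.inv G).trans (Equiv.mulRight k)) (fun g => c.coeff g)]
  refine Finset.sum_congr rfl fun h _ => ?_
  simp only [Equiv.trans_apply, Equiv.inv_apply, Equiv.coe_mulRight]
  rw [MonoidAlgebra.of_apply, MonoidAlgebra.coeff_single_mul_apply, one_mul]

lemma repr_sum (r : MonoidAlgebra F G) :
    r = ∑ g : G, r.coeff g • MonoidAlgebra.of F G g := by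
  classical
  ext k
  rw [MonoidAlgebra.coeff_sum, Finsupp.finset_sum_apply, Finset.sum_eq_single k]
  · simp [MonoidAlgebra.of_apply, MonoidAlgebra.coeff_single, Finsupp.single_apply]
  · intro b _ hb; simp [MonoidAlgebra.of_apply, MonoidAlgebra.coeff_single, Finsupp.single_apply, hb]
  · simp

/-- In the group algebra of a finite `p`-group over a field of characteristic `p`,
the cyclic module generated by any nonzero element contains a nonzero `G`-fixed element. -/
lemma exists_fixed_in_span (p : ℕ) [Fact p.Prime] [CharP F p] (hG : IsPGroup p G)
    (x : MonoidAlgebra F G) (hx : x ≠ 0) :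
    ∃ y : MonoidAlgebra F G,
      y ∈ Submodule.span (MonoidAlgebra F G) ({x} : Set (MonoidAlgebra F G)) ∧
      y ≠ 0 ∧ ∀ g : G, MonoidAlgebra.of F G g * y = y := by
  classical
  haveI : NeZero p := ⟨(Fact.out (p := p.Prime)).ne_zero⟩
  haveI : Fact (1 < p) := ⟨(Fact.out (p := p.Prime)).one_lt⟩
  have key0 : ∀ v : MonoidAlgebra F G, p • v = 0 := nsmul_p_eq_zero F G p
  have mod_smul : ∀ (n : ℕ) (v : MonoidAlgebra F G), (n % p) • v = n • v := by
    intro n v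
    conv_rhs => rw [← Nat.mod_add_div n p]
    rw [add_smul, mul_smul, key0, add_zero]
  set Φ : (G → ZMod p) → MonoidAlgebra F G :=
    fun f => ∑ g : G, (f g).val • (MonoidAlgebra.of F G g * x) with hΦ
  have Φadd : ∀ f f', Φ (f + f') = Φ f + Φ f' := by
    intro f f'
    rw [hΦ]
    simp only
    rw [← Finset.sum_add_distrib]
    refine Finset.sum_congr rfl fun g _ => ?_
    rw [Pi.add_apply, ZMod.val_add, mod_smul, add_smul]
  have Φzero : Φ 0 = 0 := by
    simp [hΦ, ZMod.val_zero]
  have Φneg : ∀ f, Φ (-f) = - Φ f := by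
    intro f
    rw [eq_neg_iff_add_eq_zero, ← Φadd, neg_add_cancel, Φzero]
  have Φmul : ∀ (h : G) f, MonoidAlgebra.of F G h * Φ f = Φ (fun k => f (h⁻¹ * k)) := by
    intro h f
    rw [hΦ]
    simp only [Finset.mul_sum]
    rw [← Equiv.sum_comp (Equiv.mulLeft h)
      (fun g => (f (h⁻¹ * g)).val • (MonoidAlgebra.of F G g * x))]
    refine Finset.sum_congr rfl fun g _ => ?_
    simp only [Equiv.coe_mulLeft]
    rw [inv_mul_cancel_left, mul_smul_comm, ← mul_assoc, ← map_mul]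
  set V : AddSubgroup (MonoidAlgebra F G) :=
    { carrier := Set.range Φ
      add_mem' := by rintro a b ⟨f, rfl⟩ ⟨f', rfl⟩; exact ⟨f + f', Φadd f f'⟩
      zero_mem' := ⟨0, Φzero⟩
      neg_mem' := by rintro a ⟨f, rfl⟩; exact ⟨-f, Φneg f⟩ } with hV
  have hxV : x ∈ V := by
    refine ⟨fun g => if g = 1 then 1 else 0, ?_⟩
    rw [hΦ]
    simp only
    rw [Finset.sum_eq_single 1]
    · rw [if_pos rfl, ZMod.val_one, one_smul, map_one, one_mul]
    · intro b _ hb; simp [hb]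
    · simp
  haveI : Fintype ↥V := (Set.finite_range Φ).fintype
  letI : SMul G ↥V := ⟨fun g v => ⟨MonoidAlgebra.of F G g * v.1, by
    obtain ⟨f, hf⟩ := v.2
    exact ⟨fun k => f (g⁻¹ * k), by rw [← hf, Φmul]⟩⟩⟩
  letI : MulAction G ↥V :=
    { one_smul := fun v => Subtype.ext (by
        show MonoidAlgebra.of F G 1 * v.1 = v.1
        rw [map_one, one_mul])
      mul_smul := fun g h v => Subtype.ext (by
        show MonoidAlgebra.of F G (g * h) * v.1
            = MonoidAlgebra.of F G g * (MonoidAlgebra.of F G h * v.1)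
        rw [map_mul, mul_assoc]) }
  have hcard := hG.card_modEq_card_fixedPoints ↥V
  have hdvd : p ∣ Nat.card ↥V := by
    have ha : addOrderOf (⟨x, hxV⟩ : ↥V) = p := by
      refine addOrderOf_eq_prime ?_ ?_
      · exact Subtype.ext (by simpa using key0 x)
      · exact fun hh => hx (by simpa using congrArg Subtype.val hh)
    rw [← ha]
    exact addOrderOf_dvd_natCard _
  have hfix : p ∣ Nat.card (MulAction.fixedPoints G ↥V) :=
    (Nat.modEq_zero_iff_dvd).mp ((hcard.symm.trans) (Nat.modEq_zero_iff_dvd.mpr hdvd))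
  have h0fix : (0 : ↥V) ∈ MulAction.fixedPoints G ↥V := by
    intro g
    exact Subtype.ext (by
      show MonoidAlgebra.of F G g * (0 : MonoidAlgebra F G) = 0
      rw [mul_zero])
  have : ∃ v : ↥V, v ∈ MulAction.fixedPoints G ↥V ∧ v ≠ 0 := by
    by_contra hcon
    push_neg at hcon
    have : MulAction.fixedPoints G ↥V = {0} := by
      ext v
      constructor
      · intro hv
        by_contra hne
        exact hne (hcon v hv)
      · rintro rfl; exact h0fix
    rw [this] at hfix
    simp at hfix
    exact (Fact.out (p := p.Prime)).ne_one hfix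
  obtain ⟨v, hvfix, hvne⟩ := this
  refine ⟨v.1, ?_, fun hh => hvne (Subtype.ext hh), fun g => ?_⟩
  · obtain ⟨f, hf⟩ := v.2
    rw [← hf, hΦ]
    refine Submodule.sum_mem _ fun g _ => ?_
    refine nsmul_mem ?_ _
    rw [← smul_eq_mul]
    exact Submodule.smul_mem _ _ (Submodule.mem_span_singleton_self x)
  · exact congrArg Subtype.val (hvfix g)

variable (M₁ : Type) [AddCommGroup M₁] [Module F M₁] [Module (MonoidAlgebra F G) M₁]
    [IsScalarTower F (MonoidAlgebra F G) M₁]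

/-- the `F`-linear version of θ -/
noncomputable def theta0 (f : M₁ →ₗ[F] F) : M₁ →ₗ[F] MonoidAlgebra F G where
  toFun z := ∑ g : G, MonoidAlgebra.single g (f (MonoidAlgebra.of F G g⁻¹ • z))
  map_add' z w := by
    rw [← Finset.sum_add_distrib]
    refine Finset.sum_congr rfl fun g _ => ?_
    rw [smul_add, map_add, MonoidAlgebra.single_add]
  map_smul' a z := by
    simp only [RingHom.id_apply]
    rw [Finset.smul_sum]
    refine Finset.sum_congr rfl fun g _ => ?_
    rw [smul_comm (MonoidAlgebra.of F G g⁻¹) a z, map_smul, MonoidAlgebra.smul_single]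

lemma theta0_apply (f : M₁ →ₗ[F] F) (z : M₁) :
    theta0 F G M₁ f z = ∑ g : G, MonoidAlgebra.single g (f (MonoidAlgebra.of F G g⁻¹ • z)) :=
  rfl

lemma theta0_of_smul (f : M₁ →ₗ[F] F) (h : G) (z : M₁) :
    theta0 F G M₁ f (MonoidAlgebra.of F G h • z)
      = MonoidAlgebra.of F G h * theta0 F G M₁ f z := by
  rw [theta0_apply, theta0_apply, Finset.mul_sum]
  refine Fintype.sum_equiv (Equiv.mulLeft h⁻¹) _ _ (fun x => ?_)
  simp only [Equiv.coe_mulLeft, smul_smul, MonoidAlgebra.of_apply,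
    MonoidAlgebra.single_mul_single, one_mul, mul_inv_cancel_left, mul_inv_rev, inv_inv]

/-- θ as a `MonoidAlgebra F G`-linear map -/
noncomputable def theta (f : M₁ →ₗ[F] F) : M₁ →ₗ[MonoidAlgebra F G] MonoidAlgebra F G where
  toFun := theta0 F G M₁ f
  map_add' := map_add _
  map_smul' r z := by
    simp only [RingHom.id_apply]
    conv_lhs => rw [repr_sum F G r]
    conv_rhs => rw [repr_sum F G r]
    rw [Finset.sum_smul, map_sum, Finset.sum_smul]
    refine Finset.sum_congr rfl fun g _ => ?_
    rw [smul_assoc, smul_assoc, map_smul, theta0_of_smul, smul_eq_mul]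

end Aux

/-- If a finite-dimensional `F G`-module `M₁` (with `G` a finite `p`-group, `char F = p`)
contains an element `m` with `N • m ≠ 0`, then `M₁` has a direct summand isomorphic to
`F G`. -/
theorem stmt6 (p : ℕ) [Fact p.Prime] (F : Type) [Field F] [CharP F p]
    (G : Type) [Group G] [Fintype G] (hG : IsPGroup p G)
    (M₁ : Type) [AddCommGroup M₁] [Module F M₁] [Module (MonoidAlgebra F G) M₁]
    [IsScalarTower F (MonoidAlgebra F G) M₁] [FiniteDimensional F M₁]
    (h : ∃ m : M₁, normElem F G • m ≠ 0) :
    ∃ (A B : Submodule (MonoidAlgebra F G) M₁), IsCompl A B ∧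
      Nonempty (A ≃ₗ[MonoidAlgebra F G] MonoidAlgebra F G) := by
  classical
  obtain ⟨m, hm⟩ := h
  -- a linear functional not vanishing on `N • m`
  have hf : ∃ f : Module.Dual F M₁, f (normElem F G • m) ≠ 0 := by
    by_contra hcon
    push_neg at hcon
    exact hm ((Module.forall_dual_apply_eq_zero_iff F _).mp hcon)
  obtain ⟨f, hf⟩ := hf
  set θ : M₁ →ₗ[MonoidAlgebra F G] MonoidAlgebra F G := theta F G M₁ f with hθ
  set c : MonoidAlgebra F G := theta0 F G M₁ f m with hc
  have hθm : θ m = c := rfl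
  -- coefficients of `c`
  have hcg : ∀ g : G, c.coeff g = f (MonoidAlgebra.of F G g⁻¹ • m) := by
    intro g
    rw [hc, theta0_apply, MonoidAlgebra.coeff_sum, Finsupp.finset_sum_apply, Finset.sum_eq_single g]
    · simp [MonoidAlgebra.coeff_single, Finsupp.single_apply]
    · intro b _ hb; simp [MonoidAlgebra.coeff_single, Finsupp.single_apply, hb]
    · simp
  have hsum : (∑ g : G, c.coeff g) = f (normElem F G • m) := by
    calc (∑ g : G, c.coeff g) = ∑ g : G, f (MonoidAlgebra.of F G g⁻¹ • m) :=
          Finset.sum_congr rfl fun g _ => hcg g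
      _ = f (∑ g : G, MonoidAlgebra.of F G g⁻¹ • m) := (map_sum f _ _).symm
      _ = f ((∑ g : G, MonoidAlgebra.of F G g⁻¹) • m) := by rw [Finset.sum_smul]
      _ = f (normElem F G • m) := by
          congr 2
          rw [normElem]
          exact Fintype.sum_equiv (Equiv.inv G) _ _ (fun g => rfl)
  have hNc : normElem F G * c = f (normElem F G • m) • normElem F G := by
    rw [normElem_mul, hsum]
  -- right multiplication by `c` is injective
  have hinj : ∀ r : MonoidAlgebra F G, r * c = 0 → r = 0 := by
    intro r hrc
    by_contra hrne
    obtain ⟨y, hyspan, hyne, hyfix⟩ := exists_fixed_in_span F G p hG r hrne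
    have hyconst : ∀ k : G, y.coeff k = y.coeff 1 := by
      intro k
      have h1 := congrArg (fun w : MonoidAlgebra F G => w.coeff 1) (hyfix k⁻¹)
      rw [MonoidAlgebra.of_apply, MonoidAlgebra.coeff_single_mul_apply, one_mul, inv_inv,
        mul_one] at h1
      exact h1
    have hy : y = y.coeff 1 • normElem F G := by
      ext k
      rw [MonoidAlgebra.coeff_smul_apply, normElem_apply, smul_eq_mul, mul_one, hyconst k]
    obtain ⟨s, hs⟩ := Submodule.mem_span_singleton.mp hyspan
    have h0 : y * c = 0 := by
      rw [← hs, smul_eq_mul, mul_assoc, hrc, mul_zero]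
    rw [hy, smul_mul_assoc, hNc] at h0
    have h1 := congrArg (fun w : MonoidAlgebra F G => w.coeff 1) h0
    simp only [MonoidAlgebra.coeff_smul_apply, normElem_apply F G (1 : G), smul_eq_mul, mul_one,
      MonoidAlgebra.coeff_zero, Finsupp.coe_zero, Pi.zero_apply] at h1
    rcases mul_eq_zero.mp h1 with h2 | h2
    · exact hyne (by rw [hy, h2, zero_smul])
    · exact hf h2
  -- right multiplication by `c` as linear equivalence
  set Rc : MonoidAlgebra F G →ₗ[MonoidAlgebra F G] MonoidAlgebra F G :=
    { toFun := fun r => r * c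
      map_add' := fun a b => add_mul a b c
      map_smul' := fun r s => by simp only [RingHom.id_apply, smul_eq_mul, mul_assoc] } with hRc
  have hRcInj : Function.Injective Rc := by
    intro a b hab
    have : (a - b) * c = 0 := by
      rw [sub_mul, sub_eq_zero]
      exact hab
    have := hinj _ this
    exact sub_eq_zero.mp this
  have hRcSurj : Function.Surjective Rc := by
    haveI : Module.Finite F (MonoidAlgebra F G) :=
      Module.Finite.equiv (MonoidAlgebra.coeffLinearEquiv F : MonoidAlgebra F G ≃ₗ[F] G →₀ F).symm
    have h2 : Function.Injective (Rc.restrictScalars F) := hRcInj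
    exact (LinearMap.injective_iff_surjective).mp h2
  set e : MonoidAlgebra F G ≃ₗ[MonoidAlgebra F G] MonoidAlgebra F G :=
    LinearEquiv.ofBijective Rc ⟨hRcInj, hRcSurj⟩ with he
  set φ : MonoidAlgebra F G →ₗ[MonoidAlgebra F G] M₁ :=
    LinearMap.toSpanSingleton (MonoidAlgebra F G) M₁ m with hφ
  set ρ : M₁ →ₗ[MonoidAlgebra F G] MonoidAlgebra F G := e.symm.toLinearMap.comp θ with hρ
  have hρφ : ∀ r : MonoidAlgebra F G, ρ (φ r) = r := by
    intro r
    have h1 : θ (r • m) = r * c := by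
      rw [map_smul, hθm, smul_eq_mul]
    show e.symm (θ (r • m)) = r
    rw [h1]
    have h2 : r * c = e r := rfl
    rw [h2, e.symm_apply_apply]
  have hφinj : Function.Injective φ := by
    intro a b hab
    rw [← hρφ a, ← hρφ b, hab]
  refine ⟨LinearMap.range φ, LinearMap.ker ρ, ⟨?_, ?_⟩, ⟨(LinearEquiv.ofInjective φ hφinj).symm⟩⟩
  · rw [Submodule.disjoint_def]
    rintro x ⟨r, rfl⟩ hx
    rw [LinearMap.mem_ker, hρφ r] at hx
    rw [hx, map_zero]
  · rw [codisjoint_iff, eq_top_iff]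
    rintro x -
    have hx : x = φ (ρ x) + (x - φ (ρ x)) := by abel
    rw [hx]
    refine Submodule.add_mem_sup ⟨ρ x, rfl⟩ ?_
    rw [LinearMap.mem_ker, map_sub, hρφ, sub_self]
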